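/- Let y ∈ ℤ with y ≥ 2, and let p, p′, r, r′ : ℤ → [0,1] and θ, θ′, κ, κ′ : ℤ → [0,2π) satisfy (for both the unprimed and primed families): p₀ = p_y = 1 (so q₀ = q_y = 0), θ₀ = 0, p_x < 1 for all 1 ≤ x ≤ y−1 (so q_x ≠ 0 for 1 ≤ x ≤ y−1), θ_x = 0 whenever p_x = 0, and κ_x = 0 whenever r_x = 0. Since q₀ = q_y = 0, the finite-dimensional subspace H_{[1,y]} = ⊕_{1≤x≤y} H_x is invariant under U_{p,r,θ,κ} and under U_{p′,r′,θ′,κ′}; let V and V′ denote their respective restrictions to H_{[1,y]}. Then V and V′ are unitarily equivalent via a unitary W on H_{[1,y]} with W H_x = H_x for all 1 ≤ x ≤ y if and only if p_x = p′_x, r_x = r′_x, θ_x = θ′_x and κ_x = κ′_x for all 1 ≤ x ≤ y. -/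

import Mathlib

noncomputable section

/-- `H = ⊕_{x∈ℤ} H_x`, the ℓ² direct sum with each `H_x` a copy of `ℂ²`. -/
abbrev H : Type := lp (fun _ : ℤ × Fin 2 => ℂ) 2

/-- The canonical orthonormal basis vector `eᵢˣ` of `H_x` viewed in `H`. -/
def e (x : ℤ) (i : Fin 2) : H := lp.single 2 (x, i) 1

/-- The subspace `H_x` of `H`. -/
def Hx (x : ℤ) : Submodule ℂ H := Submodule.span ℂ {e x 0, e x 1}

/-- The rank-one operator `|u⟩⟨v| : w ↦ ⟨v, w⟩ u`. -/
def ketbra (u v : H) : H →L[ℂ] H := ((innerSL ℂ) v).smulRight u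

/-- The orthogonal projection of `H` onto `H_x`. -/
def P (x : ℤ) : H →L[ℂ] H := ketbra (e x 0) (e x 0) + ketbra (e x 1) (e x 1)

/-- A unitary (linear isometric equivalence) viewed as a continuous linear map. -/
def clm (U : H ≃ₗᵢ[ℂ] H) : H →L[ℂ] H := U.toLinearIsometry.toContinuousLinearMap

/-- `{u, v}` is an orthonormal basis of the two dimensional space `H_x`. -/
def ONBx (x : ℤ) (u v : H) : Prop :=
  u ∈ Hx x ∧ v ∈ Hx x ∧ ‖u‖ = 1 ∧ ‖v‖ = 1 ∧ (inner ℂ u v : ℂ) = 0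

/-- The SSQW conditions: `U H_x ⊆ H_{x-1} ⊕ H_x ⊕ H_{x+1}` and
`rank(P_{x±1} U P_x) ≤ 1` for all `x`. -/
def SSQW (U : H ≃ₗᵢ[ℂ] H) : Prop :=
  (∀ x : ℤ, ∀ ψ ∈ Hx x, U ψ ∈ Hx (x - 1) ⊔ Hx x ⊔ Hx (x + 1)) ∧
  (∀ x : ℤ, LinearMap.rank (((P (x + 1)).comp ((clm U).comp (P x))).toLinearMap) ≤ 1) ∧
  (∀ x : ℤ, LinearMap.rank (((P (x - 1)).comp ((clm U).comp (P x))).toLinearMap) ≤ 1)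

/-- Unitary equivalence of quantum walks: conjugation by a unitary `W`
preserving every `H_x`. -/
def UnitEquiv (U U' : H ≃ₗᵢ[ℂ] H) : Prop :=
  ∃ W : H ≃ₗᵢ[ℂ] H,
    (∀ x : ℤ, (Hx x).map (W.toLinearEquiv : H →ₗ[ℂ] H) = Hx x) ∧
    U' = (W.symm.trans U).trans W

/-- `V` is the quantum walk `U_{p,r,θ,κ}`: with `q_x = √(1-p_x²)` and
`s_x = √(1-r_x²)`, it sends `e^{iκ_x} r_x e₁ˣ + s_x e₂ˣ` to
`e^{iθ_x} p_x e₁ˣ + q_x e₂^{x+1}`, and `s_x e₁ˣ − e^{−iκ_x} r_x e₂ˣ` to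
`q_{x−1} e₁^{x−1} − e^{−iθ_{x−1}} p_{x−1} e₂ˣ`, for every `x ∈ ℤ`. -/
def IsUprtk (p r θ κ : ℤ → ℝ) (V : H ≃ₗᵢ[ℂ] H) : Prop :=
  ∀ x : ℤ,
    V ((Complex.exp (Complex.I * (κ x : ℂ)) * (r x : ℂ)) • e x 0
        + (Real.sqrt (1 - (r x) ^ 2) : ℂ) • e x 1)
      = (Complex.exp (Complex.I * (θ x : ℂ)) * (p x : ℂ)) • e x 0
        + (Real.sqrt (1 - (p x) ^ 2) : ℂ) • e (x + 1) 1 ∧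
    V ((Real.sqrt (1 - (r x) ^ 2) : ℂ) • e x 0
        - (Complex.exp (-(Complex.I * (κ x : ℂ))) * (r x : ℂ)) • e x 1)
      = (Real.sqrt (1 - (p (x - 1)) ^ 2) : ℂ) • e (x - 1) 0
        - (Complex.exp (-(Complex.I * (θ (x - 1) : ℂ))) * (p (x - 1) : ℂ)) • e x 1

/-- The finite-dimensional subspace `H_{[m,n]} = ⊕_{m ≤ x ≤ n} H_x` of `H`. -/
def Hicc (m n : ℤ) : Submodule ℂ H :=
  Submodule.span ℂ {v : H | ∃ x : ℤ, m ≤ x ∧ x ≤ n ∧ ∃ i : Fin 2, v = e x i}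

/-! ### Auxiliary lemmas -/

open Complex in
lemma e_apply (x : ℤ) (i : Fin 2) (a : ℤ × Fin 2) :
    (e x i : ℤ × Fin 2 → ℂ) a = if a = (x, i) then 1 else 0 := by
  rcases eq_or_ne a (x, i) with h | h
  · simp [h, e, lp.single_apply_self]
  · simp [h, e, lp.single_apply_ne _ _ _ h]

lemma inner_e_e (x z : ℤ) (i j : Fin 2) :
    (inner ℂ (e x i) (e z j) : ℂ) = if x = z ∧ i = j then 1 else 0 := by
  unfold e
  rw [lp.inner_single_left, ← e, e_apply]
  simp

lemma e_mem_Hx (x : ℤ) (i : Fin 2) : e x i ∈ Hx x := by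
  fin_cases i
  · exact Submodule.subset_span (Or.inl rfl)
  · exact Submodule.subset_span (Or.inr rfl)

lemma e_mem_Hicc {m n x : ℤ} (h1 : m ≤ x) (h2 : x ≤ n) (i : Fin 2) :
    e x i ∈ Hicc m n :=
  Submodule.subset_span ⟨x, h1, h2, i, rfl⟩

lemma Hx_le_Hicc {m n x : ℤ} (h1 : m ≤ x) (h2 : x ≤ n) : Hx x ≤ Hicc m n := by
  rw [Hx, Submodule.span_le]
  rintro v (rfl | rfl)
  · exact e_mem_Hicc h1 h2 0
  · exact e_mem_Hicc h1 h2 1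

lemma rep_of_mem_Hx {z : ℤ} {v : H} (hv : v ∈ Hx z) :
    v = ((v : ℤ × Fin 2 → ℂ) (z, 0)) • e z 0 + ((v : ℤ × Fin 2 → ℂ) (z, 1)) • e z 1 := by
  obtain ⟨a, b, hab⟩ := Submodule.mem_span_pair.1 hv
  have h0 : (v : ℤ × Fin 2 → ℂ) (z, 0) = a := by
    rw [← hab]
    erw [lp.coeFn_add, Pi.add_apply, lp.coeFn_smul, lp.coeFn_smul, Pi.smul_apply, Pi.smul_apply]
    simp [e_apply, Prod.ext_iff]
  have h1 : (v : ℤ × Fin 2 → ℂ) (z, 1) = b := by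
    rw [← hab]
    erw [lp.coeFn_add, Pi.add_apply, lp.coeFn_smul, lp.coeFn_smul, Pi.smul_apply, Pi.smul_apply]
    simp [e_apply, Prod.ext_iff]
  rw [h0, h1, hab]

lemma six_coeff (x : ℤ) (c₁ c₂ c₃ c₄ c₅ c₆ d₁ d₂ d₃ d₄ d₅ d₆ : ℂ)
    (h : c₁ • e (x-1) 0 + c₂ • e (x-1) 1 + c₃ • e x 0 + c₄ • e x 1
        + c₅ • e (x+1) 0 + c₆ • e (x+1) 1
      = d₁ • e (x-1) 0 + d₂ • e (x-1) 1 + d₃ • e x 0 + d₄ • e x 1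
        + d₅ • e (x+1) 0 + d₆ • e (x+1) 1) :
    c₁ = d₁ ∧ c₂ = d₂ ∧ c₃ = d₃ ∧ c₄ = d₄ ∧ c₅ = d₅ ∧ c₆ = d₆ := by
  have key : ∀ (z : ℤ) (j : Fin 2),
      (c₁ • (e (x-1) 0 : ℤ × Fin 2 → ℂ) (z,j) + c₂ • (e (x-1) 1 : ℤ × Fin 2 → ℂ) (z,j)
        + c₃ • (e x 0 : ℤ × Fin 2 → ℂ) (z,j) + c₄ • (e x 1 : ℤ × Fin 2 → ℂ) (z,j)
        + c₅ • (e (x+1) 0 : ℤ × Fin 2 → ℂ) (z,j) + c₆ • (e (x+1) 1 : ℤ × Fin 2 → ℂ) (z,j))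
      = (d₁ • (e (x-1) 0 : ℤ × Fin 2 → ℂ) (z,j) + d₂ • (e (x-1) 1 : ℤ × Fin 2 → ℂ) (z,j)
        + d₃ • (e x 0 : ℤ × Fin 2 → ℂ) (z,j) + d₄ • (e x 1 : ℤ × Fin 2 → ℂ) (z,j)
        + d₅ • (e (x+1) 0 : ℤ × Fin 2 → ℂ) (z,j) + d₆ • (e (x+1) 1 : ℤ × Fin 2 → ℂ) (z,j)) := by
    intro z j
    have := congrArg (fun v : H => (v : ℤ × Fin 2 → ℂ) (z, j)) h
    exact this
  refine ⟨?_, ?_, ?_, ?_, ?_, ?_⟩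
  · simpa [e_apply, Prod.ext_iff, show x-1 ≠ x by omega, show x-1 ≠ x+1 by omega] using key (x-1) 0
  · simpa [e_apply, Prod.ext_iff, show x-1 ≠ x by omega, show x-1 ≠ x+1 by omega] using key (x-1) 1
  · simpa [e_apply, Prod.ext_iff, show x ≠ x-1 by omega, show x ≠ x+1 by omega] using key x 0
  · simpa [e_apply, Prod.ext_iff, show x ≠ x-1 by omega, show x ≠ x+1 by omega] using key x 1
  · simpa [e_apply, Prod.ext_iff, show x+1 ≠ x-1 by omega, show x+1 ≠ x by omega] using key (x+1) 0
  · simpa [e_apply, Prod.ext_iff, show x+1 ≠ x-1 by omega, show x+1 ≠ x by omega] using key (x+1) 1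

lemma Uprtk_e0 (p r θ κ : ℤ → ℝ) (V : H ≃ₗᵢ[ℂ] H) (hV : IsUprtk p r θ κ V)
    (x : ℤ) (hr0 : 0 ≤ r x) (hr1 : r x ≤ 1) :
    V (e x 0) =
      ((Real.sqrt (1 - (r x)^2) : ℂ) * (Real.sqrt (1 - (p (x-1))^2) : ℂ)) • e (x-1) 0
      + (Complex.exp (-(Complex.I * (κ x : ℂ))) * (r x : ℂ)
          * (Complex.exp (Complex.I * (θ x : ℂ)) * (p x : ℂ))) • e x 0
      - ((Real.sqrt (1 - (r x)^2) : ℂ)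
          * (Complex.exp (-(Complex.I * (θ (x-1) : ℂ))) * (p (x-1) : ℂ))) • e x 1
      + (Complex.exp (-(Complex.I * (κ x : ℂ))) * (r x : ℂ)
          * (Real.sqrt (1 - (p x)^2) : ℂ)) • e (x+1) 1 := by
  have h1 := (hV x).1
  have h2 := (hV x).2
  have hre : ((Real.sqrt (1 - (r x)^2) : ℝ) : ℂ)^2 = 1 - ((r x : ℂ))^2 := by
    rw [← Complex.ofReal_pow, Real.sq_sqrt (by nlinarith)]; push_cast; ring
  have hexp : Complex.exp (-(Complex.I * (κ x : ℂ))) * Complex.exp (Complex.I * (κ x : ℂ)) = 1 := by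
    rw [← Complex.exp_add]; simp
  have key : e x 0 = (Complex.exp (-(Complex.I * (κ x : ℂ))) * (r x : ℂ)) •
        ((Complex.exp (Complex.I * (κ x : ℂ)) * (r x : ℂ)) • e x 0
          + (Real.sqrt (1 - (r x) ^ 2) : ℂ) • e x 1)
      + (Real.sqrt (1 - (r x) ^ 2) : ℂ) •
        ((Real.sqrt (1 - (r x) ^ 2) : ℂ) • e x 0
          - (Complex.exp (-(Complex.I * (κ x : ℂ))) * (r x : ℂ)) • e x 1) := by
    match_scalars
    · linear_combination (-(↑(r x) : ℂ)^2) * hexp - hre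
    · ring
  conv_lhs => rw [key]
  rw [map_add, map_smul, map_smul, h1, h2]
  module

lemma Uprtk_e1 (p r θ κ : ℤ → ℝ) (V : H ≃ₗᵢ[ℂ] H) (hV : IsUprtk p r θ κ V)
    (x : ℤ) (hr0 : 0 ≤ r x) (hr1 : r x ≤ 1) :
    V (e x 1) =
      (-((Complex.exp (Complex.I * (κ x : ℂ)) * (r x : ℂ))
          * (Real.sqrt (1 - (p (x-1))^2) : ℂ))) • e (x-1) 0
      + ((Real.sqrt (1 - (r x)^2) : ℂ)
          * (Complex.exp (Complex.I * (θ x : ℂ)) * (p x : ℂ))) • e x 0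
      + ((Complex.exp (Complex.I * (κ x : ℂ)) * (r x : ℂ))
          * (Complex.exp (-(Complex.I * (θ (x-1) : ℂ))) * (p (x-1) : ℂ))) • e x 1
      + ((Real.sqrt (1 - (r x)^2) : ℂ) * (Real.sqrt (1 - (p x)^2) : ℂ)) • e (x+1) 1 := by
  have h1 := (hV x).1
  have h2 := (hV x).2
  have hre : ((Real.sqrt (1 - (r x)^2) : ℝ) : ℂ)^2 = 1 - ((r x : ℂ))^2 := by
    rw [← Complex.ofReal_pow, Real.sq_sqrt (by nlinarith)]; push_cast; ring
  have hexp : Complex.exp (-(Complex.I * (κ x : ℂ))) * Complex.exp (Complex.I * (κ x : ℂ)) = 1 := by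
    rw [← Complex.exp_add]; simp
  have key : e x 1 = (Real.sqrt (1 - (r x) ^ 2) : ℂ) •
        ((Complex.exp (Complex.I * (κ x : ℂ)) * (r x : ℂ)) • e x 0
          + (Real.sqrt (1 - (r x) ^ 2) : ℂ) • e x 1)
      - (Complex.exp (Complex.I * (κ x : ℂ)) * (r x : ℂ)) •
        ((Real.sqrt (1 - (r x) ^ 2) : ℂ) • e x 0
          - (Complex.exp (-(Complex.I * (κ x : ℂ))) * (r x : ℂ)) • e x 1) := by
    match_scalars
    · linear_combination (-(↑(r x) : ℂ)^2) * hexp - hre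
    · ring
  conv_lhs => rw [key]
  rw [map_sub, map_smul, map_smul, h1, h2]
  module

lemma exp_I_injOn {a b : ℝ} (ha : a ∈ Set.Ico (0:ℝ) (2*Real.pi)) (hb : b ∈ Set.Ico (0:ℝ) (2*Real.pi))
    (h : Complex.exp (Complex.I * (a : ℂ)) = Complex.exp (Complex.I * (b : ℂ))) : a = b := by
  rw [Complex.exp_eq_exp_iff_exists_int] at h
  obtain ⟨n, hn⟩ := h
  have him := congrArg Complex.im hn
  simp [Complex.add_im, Complex.mul_im] at him
  have hπ := Real.pi_pos
  obtain ⟨ha0, ha2⟩ := ha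
  obtain ⟨hb0, hb2⟩ := hb
  have hn0 : n = 0 := by
    rcases lt_trichotomy n 0 with h' | h' | h'
    · have h2 : n ≤ -1 := by omega
      have h3 : (n : ℝ) ≤ -1 := by exact_mod_cast h2
      nlinarith
    · exact h'
    · have h3 : (1 : ℝ) ≤ (n : ℝ) := by exact_mod_cast h'
      nlinarith
  rw [hn0] at him
  simpa using him

lemma abs_exp_I (t : ℝ) : ‖(Complex.exp (Complex.I * (t : ℂ)))‖ = 1 := by
  rw [Complex.norm_exp]
  simp

lemma abs_exp_negI (t : ℝ) : ‖(Complex.exp (-(Complex.I * (t : ℂ))))‖ = 1 := by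
  rw [Complex.norm_exp]
  simp

lemma exp_negI_inj {a b : ℝ}
    (h : Complex.exp (-(Complex.I * (a : ℂ))) = Complex.exp (-(Complex.I * (b : ℂ)))) :
    Complex.exp (Complex.I * (a : ℂ)) = Complex.exp (Complex.I * (b : ℂ)) := by
  rw [Complex.exp_neg, Complex.exp_neg] at h
  exact inv_injective h

lemma cancel_right {a b z : ℂ} (hz : z ≠ 0) (h : a * z = b * z) : a = b :=
  mul_right_cancel₀ hz h
set_option maxHeartbeats 2000000 in
/-- **Theorem 3.7, Case (4).** Let `y ≥ 2` and suppose
`p₀ = p′₀ = p_y = p′_y = 1`, `θ₀ = θ′₀ = 0`, `p_x, p′_x < 1` for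
`1 ≤ x ≤ y−1`, and the conventions `θ_x = 0` when `p_x = 0`, `κ_x = 0` when
`r_x = 0` hold.  Then the restrictions of `U_{p,r,θ,κ}` and `U_{p′,r′,θ′,κ′}`
to the invariant subspace `H_{[1,y]}` are unitarily equivalent via a unitary
preserving each `H_x` (`1 ≤ x ≤ y`) iff `p_x = p′_x`, `r_x = r′_x`,
`θ_x = θ′_x` and `κ_x = κ′_x` for all `1 ≤ x ≤ y`. -/
theorem unitary_equiv_iff_case_four (y : ℤ) (hy : 2 ≤ y)
    (p p' r r' θ θ' κ κ' : ℤ → ℝ)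
    (hp : ∀ x : ℤ, p x ∈ Set.Icc (0 : ℝ) 1) (hp' : ∀ x : ℤ, p' x ∈ Set.Icc (0 : ℝ) 1)
    (hr : ∀ x : ℤ, r x ∈ Set.Icc (0 : ℝ) 1) (hr' : ∀ x : ℤ, r' x ∈ Set.Icc (0 : ℝ) 1)
    (hθ : ∀ x : ℤ, θ x ∈ Set.Ico (0 : ℝ) (2 * Real.pi))
    (hθ' : ∀ x : ℤ, θ' x ∈ Set.Ico (0 : ℝ) (2 * Real.pi))
    (hκ : ∀ x : ℤ, κ x ∈ Set.Ico (0 : ℝ) (2 * Real.pi))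
    (hκ' : ∀ x : ℤ, κ' x ∈ Set.Ico (0 : ℝ) (2 * Real.pi))
    (hp0 : p 0 = 1) (hp0' : p' 0 = 1) (hpy : p y = 1) (hpy' : p' y = 1)
    (hθ0 : θ 0 = 0) (hθ0' : θ' 0 = 0)
    (hq : ∀ x : ℤ, 1 ≤ x → x ≤ y - 1 → p x < 1)
    (hq' : ∀ x : ℤ, 1 ≤ x → x ≤ y - 1 → p' x < 1)
    (hpθ : ∀ x : ℤ, p x = 0 → θ x = 0) (hpθ' : ∀ x : ℤ, p' x = 0 → θ' x = 0)
    (hrκ : ∀ x : ℤ, r x = 0 → κ x = 0) (hrκ' : ∀ x : ℤ, r' x = 0 → κ' x = 0)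
    (V V' : H ≃ₗᵢ[ℂ] H)
    (hV : IsUprtk p r θ κ V) (hV' : IsUprtk p' r' θ' κ' V') :
    (∃ W : H ≃ₗᵢ[ℂ] H,
        (∀ x : ℤ, 1 ≤ x → x ≤ y → (Hx x).map (W.toLinearEquiv : H →ₗ[ℂ] H) = Hx x) ∧
        (∀ ψ ∈ Hicc 1 y, W (V (W.symm ψ)) = V' ψ)) ↔
      (∀ x : ℤ, 1 ≤ x → x ≤ y →
        p x = p' x ∧ r x = r' x ∧ θ x = θ' x ∧ κ x = κ' x) := by
  constructor
  · intro hW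
    obtain ⟨W, hWmap, hWVW⟩ := hW
    -- basic facts
    have hq0 : Real.sqrt (1 - (p 0)^2) = 0 := by rw [hp0]; norm_num
    have hqy : Real.sqrt (1 - (p y)^2) = 0 := by rw [hpy]; norm_num
    have hq0' : Real.sqrt (1 - (p' 0)^2) = 0 := by rw [hp0']; norm_num
    have hqy' : Real.sqrt (1 - (p' y)^2) = 0 := by rw [hpy']; norm_num
    have hqne : ∀ z, 1 ≤ z → z ≤ y - 1 → Real.sqrt (1 - (p z)^2) ≠ 0 := by
      intro z h1 h2
      have h3 := hq z h1 h2
      have h4 := (hp z).1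
      rw [Ne, Real.sqrt_eq_zero']
      push_neg
      nlinarith
    have hrone : ∀ (f : ℤ → ℝ), (∀ z, f z ∈ Set.Icc (0:ℝ) 1) →
        ∀ z, Real.sqrt (1 - (f z)^2) = 0 → f z = 1 := by
      intro f hf z hz
      have h1 := (hf z).1
      have h2 := (hf z).2
      have h3 : 1 - (f z)^2 ≤ 0 := Real.sqrt_eq_zero'.1 hz
      nlinarith
    -- coordinates of W on each H_x
    have hWm : ∀ z, 1 ≤ z → z ≤ y → ∀ i, W (e z i) ∈ Hx z := by
      intro z h1 h2 i
      rw [← hWmap z h1 h2]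
      exact ⟨e z i, e_mem_Hx z i, rfl⟩
    set A : ℤ → ℂ := fun z => (W (e z 0) : ℤ × Fin 2 → ℂ) (z, 0) with hAdef
    set B : ℤ → ℂ := fun z => (W (e z 0) : ℤ × Fin 2 → ℂ) (z, 1) with hBdef
    set C : ℤ → ℂ := fun z => (W (e z 1) : ℤ × Fin 2 → ℂ) (z, 0) with hCdef
    set D : ℤ → ℂ := fun z => (W (e z 1) : ℤ × Fin 2 → ℂ) (z, 1) with hDdef
    have hW0 : ∀ z, 1 ≤ z → z ≤ y → W (e z 0) = A z • e z 0 + B z • e z 1 := by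
      intro z h1 h2
      exact rep_of_mem_Hx (hWm z h1 h2 0)
    have hW1 : ∀ z, 1 ≤ z → z ≤ y → W (e z 1) = C z • e z 0 + D z • e z 1 := by
      intro z h1 h2
      exact rep_of_mem_Hx (hWm z h1 h2 1)
    have hint : ∀ x, 1 ≤ x → x ≤ y → ∀ i, W (V (e x i)) = V' (W (e x i)) := by
      intro x h1 h2 i
      have hmem : W (e x i) ∈ Hicc 1 y := Hx_le_Hicc h1 h2 (hWm x h1 h2 i)
      have := hWVW (W (e x i)) hmem
      rwa [LinearIsometryEquiv.symm_apply_apply] at this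
    have hsm0 : ∀ (z : ℤ) (c : ℂ), (c = 0 ∨ (1 ≤ z ∧ z ≤ y)) →
        c • W (e z 0) = (c * A z) • e z 0 + (c * B z) • e z 1 := by
      rintro z c (rfl | ⟨h1, h2⟩)
      · simp
      · rw [hW0 z h1 h2, smul_add, smul_smul, smul_smul]
    have hsm1 : ∀ (z : ℤ) (c : ℂ), (c = 0 ∨ (1 ≤ z ∧ z ≤ y)) →
        c • W (e z 1) = (c * C z) • e z 0 + (c * D z) • e z 1 := by
      rintro z c (rfl | ⟨h1, h2⟩)
      · simp
      · rw [hW1 z h1 h2, smul_add, smul_smul, smul_smul]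
    -- master component equations
    have eqs : ∀ x, 1 ≤ x → x ≤ y →
        ((((Real.sqrt (1 - (r x)^2) : ℂ) * (Real.sqrt (1 - (p (x-1))^2) : ℂ)) * A (x-1) = (A x * ((Real.sqrt (1 - (r' x)^2) : ℂ) * (Real.sqrt (1 - (p' (x-1))^2) : ℂ)) + B x * (-((Complex.exp (Complex.I * (κ' x : ℂ)) * (r' x : ℂ)) * (Real.sqrt (1 - (p' (x-1))^2) : ℂ)))) ∧
          ((Real.sqrt (1 - (r x)^2) : ℂ) * (Real.sqrt (1 - (p (x-1))^2) : ℂ)) * B (x-1) = (0 : ℂ) ∧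
          ((Complex.exp (-(Complex.I * (κ x : ℂ))) * (r x : ℂ) * (Complex.exp (Complex.I * (θ x : ℂ)) * (p x : ℂ))) * A x - ((Real.sqrt (1 - (r x)^2) : ℂ) * (Complex.exp (-(Complex.I * (θ (x-1) : ℂ))) * (p (x-1) : ℂ))) * C x) = (A x * (Complex.exp (-(Complex.I * (κ' x : ℂ))) * (r' x : ℂ) * (Complex.exp (Complex.I * (θ' x : ℂ)) * (p' x : ℂ))) + B x * ((Real.sqrt (1 - (r' x)^2) : ℂ) * (Complex.exp (Complex.I * (θ' x : ℂ)) * (p' x : ℂ)))) ∧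
          ((Complex.exp (-(Complex.I * (κ x : ℂ))) * (r x : ℂ) * (Complex.exp (Complex.I * (θ x : ℂ)) * (p x : ℂ))) * B x - ((Real.sqrt (1 - (r x)^2) : ℂ) * (Complex.exp (-(Complex.I * (θ (x-1) : ℂ))) * (p (x-1) : ℂ))) * D x) = (A x * (-((Real.sqrt (1 - (r' x)^2) : ℂ) * (Complex.exp (-(Complex.I * (θ' (x-1) : ℂ))) * (p' (x-1) : ℂ)))) + B x * ((Complex.exp (Complex.I * (κ' x : ℂ)) * (r' x : ℂ)) * (Complex.exp (-(Complex.I * (θ' (x-1) : ℂ))) * (p' (x-1) : ℂ)))) ∧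
          (Complex.exp (-(Complex.I * (κ x : ℂ))) * (r x : ℂ) * (Real.sqrt (1 - (p x)^2) : ℂ)) * C (x+1) = (0 : ℂ) ∧
          (Complex.exp (-(Complex.I * (κ x : ℂ))) * (r x : ℂ) * (Real.sqrt (1 - (p x)^2) : ℂ)) * D (x+1) = (A x * (Complex.exp (-(Complex.I * (κ' x : ℂ))) * (r' x : ℂ) * (Real.sqrt (1 - (p' x)^2) : ℂ)) + B x * ((Real.sqrt (1 - (r' x)^2) : ℂ) * (Real.sqrt (1 - (p' x)^2) : ℂ)))) ∧
         ((-((Complex.exp (Complex.I * (κ x : ℂ)) * (r x : ℂ)) * (Real.sqrt (1 - (p (x-1))^2) : ℂ))) * A (x-1) = (C x * ((Real.sqrt (1 - (r' x)^2) : ℂ) * (Real.sqrt (1 - (p' (x-1))^2) : ℂ)) + D x * (-((Complex.exp (Complex.I * (κ' x : ℂ)) * (r' x : ℂ)) * (Real.sqrt (1 - (p' (x-1))^2) : ℂ)))) ∧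
          (-((Complex.exp (Complex.I * (κ x : ℂ)) * (r x : ℂ)) * (Real.sqrt (1 - (p (x-1))^2) : ℂ))) * B (x-1) = (0 : ℂ) ∧
          (((Real.sqrt (1 - (r x)^2) : ℂ) * (Complex.exp (Complex.I * (θ x : ℂ)) * (p x : ℂ))) * A x + ((Complex.exp (Complex.I * (κ x : ℂ)) * (r x : ℂ)) * (Complex.exp (-(Complex.I * (θ (x-1) : ℂ))) * (p (x-1) : ℂ))) * C x) = (C x * (Complex.exp (-(Complex.I * (κ' x : ℂ))) * (r' x : ℂ) * (Complex.exp (Complex.I * (θ' x : ℂ)) * (p' x : ℂ))) + D x * ((Real.sqrt (1 - (r' x)^2) : ℂ) * (Complex.exp (Complex.I * (θ' x : ℂ)) * (p' x : ℂ)))) ∧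
          (((Real.sqrt (1 - (r x)^2) : ℂ) * (Complex.exp (Complex.I * (θ x : ℂ)) * (p x : ℂ))) * B x + ((Complex.exp (Complex.I * (κ x : ℂ)) * (r x : ℂ)) * (Complex.exp (-(Complex.I * (θ (x-1) : ℂ))) * (p (x-1) : ℂ))) * D x) = (C x * (-((Real.sqrt (1 - (r' x)^2) : ℂ) * (Complex.exp (-(Complex.I * (θ' (x-1) : ℂ))) * (p' (x-1) : ℂ)))) + D x * ((Complex.exp (Complex.I * (κ' x : ℂ)) * (r' x : ℂ)) * (Complex.exp (-(Complex.I * (θ' (x-1) : ℂ))) * (p' (x-1) : ℂ)))) ∧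
          ((Real.sqrt (1 - (r x)^2) : ℂ) * (Real.sqrt (1 - (p x)^2) : ℂ)) * C (x+1) = (0 : ℂ) ∧
          ((Real.sqrt (1 - (r x)^2) : ℂ) * (Real.sqrt (1 - (p x)^2) : ℂ)) * D (x+1) = (C x * (Complex.exp (-(Complex.I * (κ' x : ℂ))) * (r' x : ℂ) * (Real.sqrt (1 - (p' x)^2) : ℂ)) + D x * ((Real.sqrt (1 - (r' x)^2) : ℂ) * (Real.sqrt (1 - (p' x)^2) : ℂ))))) := by
      intro x hx1 hxy
      have hbL : ∀ c0 : ℂ, ((c0 * (Real.sqrt (1 - (p (x-1))^2) : ℂ) = 0) ∨ (1 ≤ x-1 ∧ x-1 ≤ y)) := by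
        intro c0
        rcases eq_or_lt_of_le hx1 with h | h
        · left
          rw [show x - 1 = 0 by omega, hq0]
          simp
        · right
          exact ⟨by omega, by omega⟩
      have hbLn : ∀ c0 : ℂ, ((-(c0 * (Real.sqrt (1 - (p (x-1))^2) : ℂ)) = 0) ∨ (1 ≤ x-1 ∧ x-1 ≤ y)) := by
        intro c0
        rcases hbL c0 with h | h
        · left
          rw [h, neg_zero]
        · right
          exact h
      have hbR : ∀ c0 : ℂ, ((c0 * (Real.sqrt (1 - (p x)^2) : ℂ) = 0) ∨ (1 ≤ x+1 ∧ x+1 ≤ y)) := by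
        intro c0
        rcases eq_or_lt_of_le hxy with h | h
        · left
          rw [h, hqy]
          simp
        · right
          exact ⟨by omega, by omega⟩
      constructor
      · have hcan : (((Real.sqrt (1 - (r x)^2) : ℂ) * (Real.sqrt (1 - (p (x-1))^2) : ℂ)) * A (x-1)) • e (x-1) 0
          + (((Real.sqrt (1 - (r x)^2) : ℂ) * (Real.sqrt (1 - (p (x-1))^2) : ℂ)) * B (x-1)) • e (x-1) 1
          + (((Complex.exp (-(Complex.I * (κ x : ℂ))) * (r x : ℂ) * (Complex.exp (Complex.I * (θ x : ℂ)) * (p x : ℂ))) * A x - ((Real.sqrt (1 - (r x)^2) : ℂ) * (Complex.exp (-(Complex.I * (θ (x-1) : ℂ))) * (p (x-1) : ℂ))) * C x)) • e x 0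
          + (((Complex.exp (-(Complex.I * (κ x : ℂ))) * (r x : ℂ) * (Complex.exp (Complex.I * (θ x : ℂ)) * (p x : ℂ))) * B x - ((Real.sqrt (1 - (r x)^2) : ℂ) * (Complex.exp (-(Complex.I * (θ (x-1) : ℂ))) * (p (x-1) : ℂ))) * D x)) • e x 1
          + ((Complex.exp (-(Complex.I * (κ x : ℂ))) * (r x : ℂ) * (Real.sqrt (1 - (p x)^2) : ℂ)) * C (x+1)) • e (x+1) 0
          + ((Complex.exp (-(Complex.I * (κ x : ℂ))) * (r x : ℂ) * (Real.sqrt (1 - (p x)^2) : ℂ)) * D (x+1)) • e (x+1) 1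
            = ((A x * ((Real.sqrt (1 - (r' x)^2) : ℂ) * (Real.sqrt (1 - (p' (x-1))^2) : ℂ)) + B x * (-((Complex.exp (Complex.I * (κ' x : ℂ)) * (r' x : ℂ)) * (Real.sqrt (1 - (p' (x-1))^2) : ℂ))))) • e (x-1) 0
          + ((0 : ℂ)) • e (x-1) 1
          + ((A x * (Complex.exp (-(Complex.I * (κ' x : ℂ))) * (r' x : ℂ) * (Complex.exp (Complex.I * (θ' x : ℂ)) * (p' x : ℂ))) + B x * ((Real.sqrt (1 - (r' x)^2) : ℂ) * (Complex.exp (Complex.I * (θ' x : ℂ)) * (p' x : ℂ))))) • e x 0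
          + ((A x * (-((Real.sqrt (1 - (r' x)^2) : ℂ) * (Complex.exp (-(Complex.I * (θ' (x-1) : ℂ))) * (p' (x-1) : ℂ)))) + B x * ((Complex.exp (Complex.I * (κ' x : ℂ)) * (r' x : ℂ)) * (Complex.exp (-(Complex.I * (θ' (x-1) : ℂ))) * (p' (x-1) : ℂ))))) • e x 1
          + ((0 : ℂ)) • e (x+1) 0
          + ((A x * (Complex.exp (-(Complex.I * (κ' x : ℂ))) * (r' x : ℂ) * (Real.sqrt (1 - (p' x)^2) : ℂ)) + B x * ((Real.sqrt (1 - (r' x)^2) : ℂ) * (Real.sqrt (1 - (p' x)^2) : ℂ)))) • e (x+1) 1 := by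
          calc (((Real.sqrt (1 - (r x)^2) : ℂ) * (Real.sqrt (1 - (p (x-1))^2) : ℂ)) * A (x-1)) • e (x-1) 0
          + (((Real.sqrt (1 - (r x)^2) : ℂ) * (Real.sqrt (1 - (p (x-1))^2) : ℂ)) * B (x-1)) • e (x-1) 1
          + (((Complex.exp (-(Complex.I * (κ x : ℂ))) * (r x : ℂ) * (Complex.exp (Complex.I * (θ x : ℂ)) * (p x : ℂ))) * A x - ((Real.sqrt (1 - (r x)^2) : ℂ) * (Complex.exp (-(Complex.I * (θ (x-1) : ℂ))) * (p (x-1) : ℂ))) * C x)) • e x 0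
          + (((Complex.exp (-(Complex.I * (κ x : ℂ))) * (r x : ℂ) * (Complex.exp (Complex.I * (θ x : ℂ)) * (p x : ℂ))) * B x - ((Real.sqrt (1 - (r x)^2) : ℂ) * (Complex.exp (-(Complex.I * (θ (x-1) : ℂ))) * (p (x-1) : ℂ))) * D x)) • e x 1
          + ((Complex.exp (-(Complex.I * (κ x : ℂ))) * (r x : ℂ) * (Real.sqrt (1 - (p x)^2) : ℂ)) * C (x+1)) • e (x+1) 0
          + ((Complex.exp (-(Complex.I * (κ x : ℂ))) * (r x : ℂ) * (Real.sqrt (1 - (p x)^2) : ℂ)) * D (x+1)) • e (x+1) 1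
              = W (V (e x 0)) := by
                rw [Uprtk_e0 p r θ κ V hV x (hr x).1 (hr x).2]
                rw [map_add, map_sub, map_add, map_smul, map_smul, map_smul, map_smul]
                rw [hsm0 (x-1) _ (hbL _), hsm0 x _ (Or.inr ⟨hx1, hxy⟩),
                  hsm1 x _ (Or.inr ⟨hx1, hxy⟩), hsm1 (x+1) _ (hbR _)]
                module
            _ = V' (W (e x 0)) := hint x hx1 hxy 0
            _ = ((A x * ((Real.sqrt (1 - (r' x)^2) : ℂ) * (Real.sqrt (1 - (p' (x-1))^2) : ℂ)) + B x * (-((Complex.exp (Complex.I * (κ' x : ℂ)) * (r' x : ℂ)) * (Real.sqrt (1 - (p' (x-1))^2) : ℂ))))) • e (x-1) 0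
          + ((0 : ℂ)) • e (x-1) 1
          + ((A x * (Complex.exp (-(Complex.I * (κ' x : ℂ))) * (r' x : ℂ) * (Complex.exp (Complex.I * (θ' x : ℂ)) * (p' x : ℂ))) + B x * ((Real.sqrt (1 - (r' x)^2) : ℂ) * (Complex.exp (Complex.I * (θ' x : ℂ)) * (p' x : ℂ))))) • e x 0
          + ((A x * (-((Real.sqrt (1 - (r' x)^2) : ℂ) * (Complex.exp (-(Complex.I * (θ' (x-1) : ℂ))) * (p' (x-1) : ℂ)))) + B x * ((Complex.exp (Complex.I * (κ' x : ℂ)) * (r' x : ℂ)) * (Complex.exp (-(Complex.I * (θ' (x-1) : ℂ))) * (p' (x-1) : ℂ))))) • e x 1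
          + ((0 : ℂ)) • e (x+1) 0
          + ((A x * (Complex.exp (-(Complex.I * (κ' x : ℂ))) * (r' x : ℂ) * (Real.sqrt (1 - (p' x)^2) : ℂ)) + B x * ((Real.sqrt (1 - (r' x)^2) : ℂ) * (Real.sqrt (1 - (p' x)^2) : ℂ)))) • e (x+1) 1 := by
                rw [hW0 x hx1 hxy, map_add, map_smul, map_smul,
                  Uprtk_e0 p' r' θ' κ' V' hV' x (hr' x).1 (hr' x).2,
                  Uprtk_e1 p' r' θ' κ' V' hV' x (hr' x).1 (hr' x).2]
                module
        exact six_coeff x _ _ _ _ _ _ _ _ _ _ _ _ hcan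
      · have hcan : ((-((Complex.exp (Complex.I * (κ x : ℂ)) * (r x : ℂ)) * (Real.sqrt (1 - (p (x-1))^2) : ℂ))) * A (x-1)) • e (x-1) 0
          + ((-((Complex.exp (Complex.I * (κ x : ℂ)) * (r x : ℂ)) * (Real.sqrt (1 - (p (x-1))^2) : ℂ))) * B (x-1)) • e (x-1) 1
          + ((((Real.sqrt (1 - (r x)^2) : ℂ) * (Complex.exp (Complex.I * (θ x : ℂ)) * (p x : ℂ))) * A x + ((Complex.exp (Complex.I * (κ x : ℂ)) * (r x : ℂ)) * (Complex.exp (-(Complex.I * (θ (x-1) : ℂ))) * (p (x-1) : ℂ))) * C x)) • e x 0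
          + ((((Real.sqrt (1 - (r x)^2) : ℂ) * (Complex.exp (Complex.I * (θ x : ℂ)) * (p x : ℂ))) * B x + ((Complex.exp (Complex.I * (κ x : ℂ)) * (r x : ℂ)) * (Complex.exp (-(Complex.I * (θ (x-1) : ℂ))) * (p (x-1) : ℂ))) * D x)) • e x 1
          + (((Real.sqrt (1 - (r x)^2) : ℂ) * (Real.sqrt (1 - (p x)^2) : ℂ)) * C (x+1)) • e (x+1) 0
          + (((Real.sqrt (1 - (r x)^2) : ℂ) * (Real.sqrt (1 - (p x)^2) : ℂ)) * D (x+1)) • e (x+1) 1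
            = ((C x * ((Real.sqrt (1 - (r' x)^2) : ℂ) * (Real.sqrt (1 - (p' (x-1))^2) : ℂ)) + D x * (-((Complex.exp (Complex.I * (κ' x : ℂ)) * (r' x : ℂ)) * (Real.sqrt (1 - (p' (x-1))^2) : ℂ))))) • e (x-1) 0
          + ((0 : ℂ)) • e (x-1) 1
          + ((C x * (Complex.exp (-(Complex.I * (κ' x : ℂ))) * (r' x : ℂ) * (Complex.exp (Complex.I * (θ' x : ℂ)) * (p' x : ℂ))) + D x * ((Real.sqrt (1 - (r' x)^2) : ℂ) * (Complex.exp (Complex.I * (θ' x : ℂ)) * (p' x : ℂ))))) • e x 0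
          + ((C x * (-((Real.sqrt (1 - (r' x)^2) : ℂ) * (Complex.exp (-(Complex.I * (θ' (x-1) : ℂ))) * (p' (x-1) : ℂ)))) + D x * ((Complex.exp (Complex.I * (κ' x : ℂ)) * (r' x : ℂ)) * (Complex.exp (-(Complex.I * (θ' (x-1) : ℂ))) * (p' (x-1) : ℂ))))) • e x 1
          + ((0 : ℂ)) • e (x+1) 0
          + ((C x * (Complex.exp (-(Complex.I * (κ' x : ℂ))) * (r' x : ℂ) * (Real.sqrt (1 - (p' x)^2) : ℂ)) + D x * ((Real.sqrt (1 - (r' x)^2) : ℂ) * (Real.sqrt (1 - (p' x)^2) : ℂ)))) • e (x+1) 1 := by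
          calc ((-((Complex.exp (Complex.I * (κ x : ℂ)) * (r x : ℂ)) * (Real.sqrt (1 - (p (x-1))^2) : ℂ))) * A (x-1)) • e (x-1) 0
          + ((-((Complex.exp (Complex.I * (κ x : ℂ)) * (r x : ℂ)) * (Real.sqrt (1 - (p (x-1))^2) : ℂ))) * B (x-1)) • e (x-1) 1
          + ((((Real.sqrt (1 - (r x)^2) : ℂ) * (Complex.exp (Complex.I * (θ x : ℂ)) * (p x : ℂ))) * A x + ((Complex.exp (Complex.I * (κ x : ℂ)) * (r x : ℂ)) * (Complex.exp (-(Complex.I * (θ (x-1) : ℂ))) * (p (x-1) : ℂ))) * C x)) • e x 0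
          + ((((Real.sqrt (1 - (r x)^2) : ℂ) * (Complex.exp (Complex.I * (θ x : ℂ)) * (p x : ℂ))) * B x + ((Complex.exp (Complex.I * (κ x : ℂ)) * (r x : ℂ)) * (Complex.exp (-(Complex.I * (θ (x-1) : ℂ))) * (p (x-1) : ℂ))) * D x)) • e x 1
          + (((Real.sqrt (1 - (r x)^2) : ℂ) * (Real.sqrt (1 - (p x)^2) : ℂ)) * C (x+1)) • e (x+1) 0
          + (((Real.sqrt (1 - (r x)^2) : ℂ) * (Real.sqrt (1 - (p x)^2) : ℂ)) * D (x+1)) • e (x+1) 1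
              = W (V (e x 1)) := by
                rw [Uprtk_e1 p r θ κ V hV x (hr x).1 (hr x).2]
                rw [map_add, map_add, map_add, map_smul, map_smul, map_smul, map_smul]
                rw [hsm0 (x-1) _ (hbLn _), hsm0 x _ (Or.inr ⟨hx1, hxy⟩),
                  hsm1 x _ (Or.inr ⟨hx1, hxy⟩), hsm1 (x+1) _ (hbR _)]
                module
            _ = V' (W (e x 1)) := hint x hx1 hxy 1
            _ = ((C x * ((Real.sqrt (1 - (r' x)^2) : ℂ) * (Real.sqrt (1 - (p' (x-1))^2) : ℂ)) + D x * (-((Complex.exp (Complex.I * (κ' x : ℂ)) * (r' x : ℂ)) * (Real.sqrt (1 - (p' (x-1))^2) : ℂ))))) • e (x-1) 0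
          + ((0 : ℂ)) • e (x-1) 1
          + ((C x * (Complex.exp (-(Complex.I * (κ' x : ℂ))) * (r' x : ℂ) * (Complex.exp (Complex.I * (θ' x : ℂ)) * (p' x : ℂ))) + D x * ((Real.sqrt (1 - (r' x)^2) : ℂ) * (Complex.exp (Complex.I * (θ' x : ℂ)) * (p' x : ℂ))))) • e x 0
          + ((C x * (-((Real.sqrt (1 - (r' x)^2) : ℂ) * (Complex.exp (-(Complex.I * (θ' (x-1) : ℂ))) * (p' (x-1) : ℂ)))) + D x * ((Complex.exp (Complex.I * (κ' x : ℂ)) * (r' x : ℂ)) * (Complex.exp (-(Complex.I * (θ' (x-1) : ℂ))) * (p' (x-1) : ℂ))))) • e x 1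
          + ((0 : ℂ)) • e (x+1) 0
          + ((C x * (Complex.exp (-(Complex.I * (κ' x : ℂ))) * (r' x : ℂ) * (Real.sqrt (1 - (p' x)^2) : ℂ)) + D x * ((Real.sqrt (1 - (r' x)^2) : ℂ) * (Real.sqrt (1 - (p' x)^2) : ℂ)))) • e (x+1) 1 := by
                rw [hW1 x hx1 hxy, map_add, map_smul, map_smul,
                  Uprtk_e0 p' r' θ' κ' V' hV' x (hr' x).1 (hr' x).2,
                  Uprtk_e1 p' r' θ' κ' V' hV' x (hr' x).1 (hr' x).2]
                module
        exact six_coeff x _ _ _ _ _ _ _ _ _ _ _ _ hcan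
    -- unitarity of blocks of W
    have hU : ∀ z, 1 ≤ z → z ≤ y →
        ((starRingEnd ℂ) (A z) * A z + (starRingEnd ℂ) (B z) * B z = 1 ∧
         (starRingEnd ℂ) (C z) * C z + (starRingEnd ℂ) (D z) * D z = 1 ∧
         (starRingEnd ℂ) (A z) * C z + (starRingEnd ℂ) (B z) * D z = 0) := by
      intro z h1 h2
      have i00 : (inner ℂ (W (e z 0)) (W (e z 0)) : ℂ) = 1 := by
        rw [LinearIsometryEquiv.inner_map_map]
        rw [inner_e_e]; simp
      have i11 : (inner ℂ (W (e z 1)) (W (e z 1)) : ℂ) = 1 := by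
        rw [LinearIsometryEquiv.inner_map_map]
        rw [inner_e_e]; simp
      have i01 : (inner ℂ (W (e z 0)) (W (e z 1)) : ℂ) = 0 := by
        rw [LinearIsometryEquiv.inner_map_map]
        simp [inner_e_e]
      rw [hW0 z h1 h2, hW1 z h1 h2] at i01
      rw [hW0 z h1 h2] at i00
      rw [hW1 z h1 h2] at i11
      simp only [inner_add_left, inner_add_right, inner_smul_left, inner_smul_right,
        inner_e_e] at i00 i11 i01
      norm_num at i00 i11 i01
      exact ⟨by linear_combination i00, by linear_combination i11, by linear_combination i01⟩
    have hfz : ∀ {a b : ℂ}, a * b = 0 → a ≠ 0 → b = 0 := by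
      intro a b h ha
      exact (mul_eq_zero.1 h).resolve_left ha
    have hcne : ∀ {t : ℝ}, t ≠ 0 → (t : ℂ) ≠ 0 := by
      intro t ht
      exact_mod_cast ht
    have hBz : ∀ z, 1 ≤ z → z ≤ y - 1 → B z = 0 := by
      intro z h1 h2
      obtain ⟨E0, E1⟩ := eqs (z+1) (by omega) (by omega)
      have E02 := E0.2.1
      have E12 := E1.2.1
      simp only [add_sub_cancel_right] at E02 E12
      have hQm : (Real.sqrt (1 - (p z)^2) : ℂ) ≠ 0 := hcne (hqne z h1 h2)
      by_cases hs : Real.sqrt (1 - (r (z+1))^2) = 0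
      · have hr1 : r (z+1) = 1 := hrone r hr (z+1) hs
        refine hfz E12 ?_
        rw [hr1]
        push_cast
        simp [Complex.exp_ne_zero, hQm]
      · refine hfz E02 ?_
        exact mul_ne_zero (hcne hs) hQm
    have hCz : ∀ z, 2 ≤ z → z ≤ y → C z = 0 := by
      intro z h1 h2
      obtain ⟨E0, E1⟩ := eqs (z-1) (by omega) (by omega)
      have E05 := E0.2.2.2.2.1
      have E15 := E1.2.2.2.2.1
      simp only [sub_add_cancel] at E05 E15
      have hQ : (Real.sqrt (1 - (p (z-1))^2) : ℂ) ≠ 0 := hcne (hqne (z-1) (by omega) (by omega))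
      by_cases hs : Real.sqrt (1 - (r (z-1))^2) = 0
      · have hr1 : r (z-1) = 1 := hrone r hr (z-1) hs
        refine hfz E05 ?_
        rw [hr1]
        push_cast
        simp [Complex.exp_ne_zero, hQ]
      · refine hfz E15 ?_
        exact mul_ne_zero (hcne hs) hQ
    have hBCAD : ∀ z, 1 ≤ z → z ≤ y →
        (B z = 0 ∧ C z = 0 ∧ (starRingEnd ℂ) (A z) * A z = 1 ∧
          (starRingEnd ℂ) (D z) * D z = 1) := by
      intro z h1 h2
      obtain ⟨u1, u2, u3⟩ := hU z h1 h2
      rcases eq_or_lt_of_le h2 with hzy | hzy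
      · have hC0 : C z = 0 := hCz z (by omega) h2
        have hD : (starRingEnd ℂ) (D z) * D z = 1 := by
          rw [hC0] at u2
          simpa using u2
        have hDne : D z ≠ 0 := by
          intro h
          rw [h] at hD
          simp at hD
        have hB0 : B z = 0 := by
          rw [hC0] at u3
          simp only [mul_zero, zero_add] at u3
          have := hfz (mul_comm ((starRingEnd ℂ) (B z)) (D z) ▸ u3) hDne
          simpa using this
        refine ⟨hB0, hC0, ?_, hD⟩
        rw [hB0] at u1
        simpa using u1
      · have hB0 : B z = 0 := hBz z h1 (by omega)
        have hA : (starRingEnd ℂ) (A z) * A z = 1 := by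
          rw [hB0] at u1
          simpa using u1
        have hAne : A z ≠ 0 := by
          intro h
          rw [h] at hA
          simp at hA
        have hC0 : C z = 0 := by
          rw [hB0] at u3
          simp only [map_zero, zero_mul, add_zero] at u3
          exact hfz u3 (by simpa using hAne)
        refine ⟨hB0, hC0, hA, ?_⟩
        rw [hC0] at u2
        simpa using u2
    have hAne : ∀ z, 1 ≤ z → z ≤ y → A z ≠ 0 := by
      intro z h1 h2 h
      have := (hBCAD z h1 h2).2.2.1
      rw [h] at this
      simp at this
    have hDne : ∀ z, 1 ≤ z → z ≤ y → D z ≠ 0 := by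
      intro z h1 h2 h
      have := (hBCAD z h1 h2).2.2.2
      rw [h] at this
      simp at this
    have habsA : ∀ z, 1 ≤ z → z ≤ y → ‖A z‖ = 1 := by
      intro z h1 h2
      have := congrArg norm (hBCAD z h1 h2).2.2.1
      simp only [norm_mul, Complex.norm_conj, norm_one] at this
      nlinarith [norm_nonneg (A z)]
    have habsD : ∀ z, 1 ≤ z → z ≤ y → ‖D z‖ = 1 := by
      intro z h1 h2
      have := congrArg norm (hBCAD z h1 h2).2.2.2
      simp only [norm_mul, Complex.norm_conj, norm_one] at this
      nlinarith [norm_nonneg (D z)]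
    -- cleaned equations (with B = C = 0 substituted)
    have cleanEqs : ∀ x, 1 ≤ x → x ≤ y →
        (((Real.sqrt (1 - (r x)^2) : ℂ) * (Real.sqrt (1 - (p (x-1))^2) : ℂ)) * A (x-1) = A x * ((Real.sqrt (1 - (r' x)^2) : ℂ) * (Real.sqrt (1 - (p' (x-1))^2) : ℂ)) ∧
          (Complex.exp (-(Complex.I * (κ x : ℂ))) * (r x : ℂ) * (Complex.exp (Complex.I * (θ x : ℂ)) * (p x : ℂ))) * A x = A x * (Complex.exp (-(Complex.I * (κ' x : ℂ))) * (r' x : ℂ) * (Complex.exp (Complex.I * (θ' x : ℂ)) * (p' x : ℂ))) ∧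
          ((Real.sqrt (1 - (r x)^2) : ℂ) * (Complex.exp (-(Complex.I * (θ (x-1) : ℂ))) * (p (x-1) : ℂ))) * D x = A x * ((Real.sqrt (1 - (r' x)^2) : ℂ) * (Complex.exp (-(Complex.I * (θ' (x-1) : ℂ))) * (p' (x-1) : ℂ))) ∧
          (Complex.exp (-(Complex.I * (κ x : ℂ))) * (r x : ℂ) * (Real.sqrt (1 - (p x)^2) : ℂ)) * D (x+1) = A x * (Complex.exp (-(Complex.I * (κ' x : ℂ))) * (r' x : ℂ) * (Real.sqrt (1 - (p' x)^2) : ℂ)) ∧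
          ((Complex.exp (Complex.I * (κ x : ℂ)) * (r x : ℂ)) * (Real.sqrt (1 - (p (x-1))^2) : ℂ)) * A (x-1) = D x * ((Complex.exp (Complex.I * (κ' x : ℂ)) * (r' x : ℂ)) * (Real.sqrt (1 - (p' (x-1))^2) : ℂ)) ∧
          ((Real.sqrt (1 - (r x)^2) : ℂ) * (Complex.exp (Complex.I * (θ x : ℂ)) * (p x : ℂ))) * A x = D x * ((Real.sqrt (1 - (r' x)^2) : ℂ) * (Complex.exp (Complex.I * (θ' x : ℂ)) * (p' x : ℂ))) ∧
          ((Complex.exp (Complex.I * (κ x : ℂ)) * (r x : ℂ)) * (Complex.exp (-(Complex.I * (θ (x-1) : ℂ))) * (p (x-1) : ℂ))) * D x = D x * ((Complex.exp (Complex.I * (κ' x : ℂ)) * (r' x : ℂ)) * (Complex.exp (-(Complex.I * (θ' (x-1) : ℂ))) * (p' (x-1) : ℂ))) ∧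
          ((Real.sqrt (1 - (r x)^2) : ℂ) * (Real.sqrt (1 - (p x)^2) : ℂ)) * D (x+1) = D x * ((Real.sqrt (1 - (r' x)^2) : ℂ) * (Real.sqrt (1 - (p' x)^2) : ℂ))) := by
      intro x hx1 hxy
      obtain ⟨E0, E1⟩ := eqs x hx1 hxy
      have hB0 : B x = 0 := (hBCAD x hx1 hxy).1
      have hC0 : C x = 0 := (hBCAD x hx1 hxy).2.1
      rw [hB0, hC0] at E0 E1
      refine ⟨?_, ?_, ?_, ?_, ?_, ?_, ?_, ?_⟩
      · linear_combination E0.1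
      · linear_combination E0.2.2.1
      · linear_combination -E0.2.2.2.1
      · linear_combination E0.2.2.2.2.2
      · linear_combination -E1.1
      · linear_combination E1.2.2.1
      · linear_combination E1.2.2.2.1
      · linear_combination E1.2.2.2.2.2
    -- moduli equalities
    have hsq : ∀ (f : ℤ → ℝ), (∀ z, f z ∈ Set.Icc (0:ℝ) 1) →
        ∀ z, (Real.sqrt (1 - (f z)^2))^2 = 1 - (f z)^2 := by
      intro f hf z
      exact Real.sq_sqrt (by nlinarith [(hf z).1, (hf z).2])
    have hRPs : ∀ z, 1 ≤ z → z ≤ y →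
        (r z * p z = r' z * p' z ∧
         Real.sqrt (1 - (r z)^2) * p z = Real.sqrt (1 - (r' z)^2) * p' z) := by
      intro z h1 h2
      obtain ⟨eA, eB, eC, eD, eE, eF, eG, eH⟩ := cleanEqs z h1 h2
      constructor
      · have hBc : Complex.exp (-(Complex.I * (κ z : ℂ))) * (r z : ℂ)
            * (Complex.exp (Complex.I * (θ z : ℂ)) * (p z : ℂ))
            = Complex.exp (-(Complex.I * (κ' z : ℂ))) * (r' z : ℂ)
            * (Complex.exp (Complex.I * (θ' z : ℂ)) * (p' z : ℂ)) := by
          refine cancel_right (hAne z h1 h2) ?_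
          linear_combination eB
        have habs1 := congrArg norm hBc
        simp only [norm_mul, abs_exp_I, abs_exp_negI, Complex.norm_real, Real.norm_eq_abs,
          abs_of_nonneg (hp z).1, abs_of_nonneg (hp' z).1,
          abs_of_nonneg (hr z).1, abs_of_nonneg (hr' z).1, one_mul] at habs1
        linarith [habs1]
      · have habs2 := congrArg norm eF
        simp only [norm_mul, abs_exp_I, Complex.norm_real, Real.norm_eq_abs,
          habsA z h1 h2, habsD z h1 h2,
          abs_of_nonneg (hp z).1, abs_of_nonneg (hp' z).1,
          abs_of_nonneg (Real.sqrt_nonneg (1 - (r z)^2)),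
          abs_of_nonneg (Real.sqrt_nonneg (1 - (r' z)^2)), one_mul, mul_one] at habs2
        linarith [habs2]
    have hpp : ∀ z, 1 ≤ z → z ≤ y → p z = p' z := by
      intro z h1 h2
      obtain ⟨hRP, hSP⟩ := hRPs z h1 h2
      have h3 := hsq r hr z
      have h4 := hsq r' hr' z
      have hRP2 : (r z * p z)^2 = (r' z * p' z)^2 := by rw [hRP]
      have hSP2 : (Real.sqrt (1 - (r z)^2) * p z)^2 = (Real.sqrt (1 - (r' z)^2) * p' z)^2 := by
        rw [hSP]
      have hsqp : (p z)^2 = (p' z)^2 := by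
        linear_combination hRP2 + hSP2 - (p z)^2 * h3 + (p' z)^2 * h4
      rw [← Real.sqrt_sq (hp z).1, ← Real.sqrt_sq (hp' z).1, hsqp]
    have hrr : ∀ z, 1 ≤ z → z ≤ y → r z = r' z := by
      intro z h1 h2
      by_cases hpz : p z = 0
      · have hzy : z ≤ y - 1 := by
          rcases eq_or_lt_of_le h2 with h | h
          · exfalso
            rw [h, hpy] at hpz
            norm_num at hpz
          · omega
        obtain ⟨eA, eB, eC, eD, eE, eF, eG, eH⟩ := cleanEqs z h1 h2
        have habs3 := congrArg norm eD
        simp only [norm_mul, abs_exp_I, abs_exp_negI, Complex.norm_real, Real.norm_eq_abs,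
          habsA z h1 h2, habsD (z+1) (by omega) (by omega),
          abs_of_nonneg (hr z).1, abs_of_nonneg (hr' z).1,
          abs_of_nonneg (Real.sqrt_nonneg (1 - (p z)^2)),
          abs_of_nonneg (Real.sqrt_nonneg (1 - (p' z)^2)), one_mul, mul_one] at habs3
        have hq1 : Real.sqrt (1 - (p z)^2) = 1 := by
          rw [hpz]
          norm_num
        have hq1' : Real.sqrt (1 - (p' z)^2) = 1 := by
          rw [← hpp z h1 h2, hpz]
          norm_num
        rw [hq1, hq1'] at habs3
        linarith [habs3]
      · have hRP := (hRPs z h1 h2).1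
        rw [← hpp z h1 h2] at hRP
        exact mul_right_cancel₀ hpz hRP
    have hss : ∀ z, 1 ≤ z → z ≤ y → Real.sqrt (1 - (r z)^2) = Real.sqrt (1 - (r' z)^2) := by
      intro z h1 h2
      rw [hrr z h1 h2]
    have hppm : ∀ x, 1 ≤ x → x ≤ y → p (x-1) = p' (x-1) := by
      intro x h1 h2
      rcases eq_or_lt_of_le h1 with h | h
      · rw [show x - 1 = 0 by omega, hp0, hp0']
      · exact hpp (x-1) (by omega) (by omega)
    -- main induction on x: phases agree and D x = A x (when s_x ≠ 0)
    have step : ∀ x, 1 ≤ x → x ≤ y →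
        θ (x-1) = θ' (x-1) →
        (p (x-1) = 0 → κ (x-1) = κ' (x-1) ∧
          (Real.sqrt (1 - (r (x-1))^2) ≠ 0 → D (x-1) = A (x-1))) →
        (θ x = θ' x ∧ κ x = κ' x ∧ (Real.sqrt (1 - (r x)^2) ≠ 0 → D x = A x)) := by
      intro x hx1 hxy prevθ prevKM
      obtain ⟨eA, eB, eC, eD, eE, eF, eG, eH⟩ := cleanEqs x hx1 hxy
      have hx2of : p (x-1) = 0 → 2 ≤ x := by
        intro hc
        rcases eq_or_lt_of_le hx1 with h | h
        · exfalso
          rw [show x - 1 = 0 by omega, hp0] at hc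
          norm_num at hc
        · omega
      have hq1m : p (x-1) = 0 → Real.sqrt (1 - (p (x-1))^2) = 1 := by
        intro h
        rw [h]
        norm_num
      have hlink : p (x-1) = 0 → D x = A (x-1) := by
        intro hpm0
        have hx2 : 2 ≤ x := hx2of hpm0
        obtain ⟨prevK, prevM⟩ := prevKM hpm0
        obtain ⟨fA, fB, fC, fD, fE, fF, fG, fH⟩ := cleanEqs (x-1) (by omega) (by omega)
        rw [sub_add_cancel] at fD fH
        have hr1 : r' (x-1) = r (x-1) := (hrr (x-1) (by omega) (by omega)).symm
        have hp1 : p' (x-1) = p (x-1) := (hpp (x-1) (by omega) (by omega)).symm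
        rw [hr1, hp1, hq1m hpm0] at fD fH
        by_cases hrm : r (x-1) = 0
        · have hs1 : Real.sqrt (1 - (r (x-1))^2) = 1 := by
            rw [hrm]
            norm_num
          rw [hs1] at fH
          have hDD : D x = D (x-1) := by
            have h' : D x * 1 = D (x-1) * 1 := by
              push_cast at fH
              linear_combination fH
            simpa using h'
          have hDA : D (x-1) = A (x-1) := prevM (by rw [hs1]; norm_num)
          rw [hDD, hDA]
        · rw [← prevK] at fD
          have h' : D x * (Complex.exp (-(Complex.I * (κ (x-1) : ℂ))) * (r (x-1) : ℂ))
              = A (x-1) * (Complex.exp (-(Complex.I * (κ (x-1) : ℂ))) * (r (x-1) : ℂ)) := by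
            push_cast at fD
            linear_combination fD
          exact cancel_right (mul_ne_zero (Complex.exp_ne_zero _) (hcne hrm)) h'
      have hM : Real.sqrt (1 - (r x)^2) ≠ 0 → D x = A x := by
        intro hs
        by_cases hpm : p (x-1) = 0
        · have hx2 : 2 ≤ x := hx2of hpm
          have hDx := hlink hpm
          rw [← hppm x hx1 hxy, ← hss x hx1 hxy, hq1m hpm] at eA
          have hAA : A (x-1) = A x := by
            have h' : A (x-1) * (Real.sqrt (1 - (r x)^2) : ℂ)
                = A x * (Real.sqrt (1 - (r x)^2) : ℂ) := by
              push_cast at eA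
              linear_combination eA
            exact cancel_right (hcne hs) h'
          rw [hDx, hAA]
        · rw [← hppm x hx1 hxy, ← hss x hx1 hxy, ← prevθ] at eC
          have h' : D x * ((Real.sqrt (1 - (r x)^2) : ℂ)
                * (Complex.exp (-(Complex.I * (θ (x-1) : ℂ))) * (p (x-1) : ℂ)))
              = A x * ((Real.sqrt (1 - (r x)^2) : ℂ)
                * (Complex.exp (-(Complex.I * (θ (x-1) : ℂ))) * (p (x-1) : ℂ))) := by
            linear_combination eC
          exact cancel_right (mul_ne_zero (hcne hs)
            (mul_ne_zero (Complex.exp_ne_zero _) (hcne hpm))) h'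
      have hK : κ x = κ' x := by
        by_cases hrx : r x = 0
        · rw [hrκ x hrx, hrκ' x (by rw [← hrr x hx1 hxy]; exact hrx)]
        · by_cases hpm : p (x-1) = 0
          · have hx2 : 2 ≤ x := hx2of hpm
            have hDx := hlink hpm
            rw [← hppm x hx1 hxy, ← hrr x hx1 hxy, hDx, hq1m hpm] at eE
            have h' : Complex.exp (Complex.I * (κ x : ℂ)) * ((r x : ℂ) * A (x-1))
                = Complex.exp (Complex.I * (κ' x : ℂ)) * ((r x : ℂ) * A (x-1)) := by
              push_cast at eE
              linear_combination eE
            exact exp_I_injOn (hκ x) (hκ' x)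
              (cancel_right (mul_ne_zero (hcne hrx) (hAne (x-1) (by omega) (by omega))) h')
          · rw [← hppm x hx1 hxy, ← hrr x hx1 hxy, ← prevθ] at eG
            have h' : Complex.exp (Complex.I * (κ x : ℂ))
                  * ((r x : ℂ) * (Complex.exp (-(Complex.I * (θ (x-1) : ℂ)))
                    * (p (x-1) : ℂ)) * D x)
                = Complex.exp (Complex.I * (κ' x : ℂ))
                  * ((r x : ℂ) * (Complex.exp (-(Complex.I * (θ (x-1) : ℂ)))
                    * (p (x-1) : ℂ)) * D x) := by
              linear_combination eG
            exact exp_I_injOn (hκ x) (hκ' x)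
              (cancel_right (mul_ne_zero (mul_ne_zero (hcne hrx)
                (mul_ne_zero (Complex.exp_ne_zero _) (hcne hpm))) (hDne x hx1 hxy)) h')
      have hT : θ x = θ' x := by
        by_cases hpx : p x = 0
        · rw [hpθ x hpx, hpθ' x (by rw [← hpp x hx1 hxy]; exact hpx)]
        · by_cases hs : Real.sqrt (1 - (r x)^2) = 0
          · have hrx1 : r x = 1 := hrone r hr x hs
            rw [← hpp x hx1 hxy, ← hrr x hx1 hxy, ← hK] at eB
            have h' : Complex.exp (Complex.I * (θ x : ℂ))
                  * (Complex.exp (-(Complex.I * (κ x : ℂ))) * (r x : ℂ) * (p x : ℂ) * A x)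
                = Complex.exp (Complex.I * (θ' x : ℂ))
                  * (Complex.exp (-(Complex.I * (κ x : ℂ))) * (r x : ℂ) * (p x : ℂ) * A x) := by
              linear_combination eB
            refine exp_I_injOn (hθ x) (hθ' x) (cancel_right ?_ h')
            refine mul_ne_zero (mul_ne_zero (mul_ne_zero (Complex.exp_ne_zero _) ?_)
              (hcne hpx)) (hAne x hx1 hxy)
            rw [hrx1]
            norm_num
          · have hDA := hM hs
            rw [← hpp x hx1 hxy, ← hss x hx1 hxy, hDA] at eF
            have h' : Complex.exp (Complex.I * (θ x : ℂ))
                  * ((Real.sqrt (1 - (r x)^2) : ℂ) * (p x : ℂ) * A x)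
                = Complex.exp (Complex.I * (θ' x : ℂ))
                  * ((Real.sqrt (1 - (r x)^2) : ℂ) * (p x : ℂ) * A x) := by
              linear_combination eF
            refine exp_I_injOn (hθ x) (hθ' x) (cancel_right ?_ h')
            exact mul_ne_zero (mul_ne_zero (hcne hs) (hcne hpx)) (hAne x hx1 hxy)
      exact ⟨hT, hK, hM⟩
    have main : ∀ x, 1 ≤ x → x ≤ y →
        (θ x = θ' x ∧ κ x = κ' x ∧ (Real.sqrt (1 - (r x)^2) ≠ 0 → D x = A x)) := by
      intro x hx1
      refine Int.le_induction (motive := fun x _ => x ≤ y →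
        (θ x = θ' x ∧ κ x = κ' x ∧ (Real.sqrt (1 - (r x)^2) ≠ 0 → D x = A x))) ?_ ?_ x hx1
      · intro h1y
        refine step 1 le_rfl h1y ?_ ?_
        · rw [show (1:ℤ) - 1 = 0 by norm_num, hθ0, hθ0']
        · intro hc
          rw [show (1:ℤ) - 1 = 0 by norm_num, hp0] at hc
          norm_num at hc
      · intro n hn ih hny
        have ihn := ih (by omega)
        refine step (n+1) (by omega) hny ?_ ?_
        · rw [show n + 1 - 1 = n by omega]
          exact ihn.1
        · rw [show n + 1 - 1 = n by omega]
          exact fun _ => ⟨ihn.2.1, ihn.2.2⟩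
    intro x hx1 hxy
    exact ⟨hpp x hx1 hxy, hrr x hx1 hxy, (main x hx1 hxy).1, (main x hx1 hxy).2.1⟩
  · -- Reverse direction: equal parameters give the trivial intertwiner.
    intro hparams
    refine ⟨LinearIsometryEquiv.refl ℂ H, fun x hx hxy => ?_, fun ψ hψ => ?_⟩
    · convert Submodule.map_id (Hx x) using 2; rfl
    · have hVV : V ψ = V' ψ := by
        induction hψ using Submodule.span_induction with
        | mem v hv =>
          obtain ⟨z, hz1, hz2, i, rfl⟩ := hv
          have h2p : p (z-1) = p' (z-1) := by
            rcases eq_or_lt_of_le hz1 with h | h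
            · rw [show z - 1 = 0 by omega, hp0, hp0']
            · exact (hparams (z-1) (by omega) (by omega)).1
          have h2θ : θ (z-1) = θ' (z-1) := by
            rcases eq_or_lt_of_le hz1 with h | h
            · rw [show z - 1 = 0 by omega, hθ0, hθ0']
            · exact (hparams (z-1) (by omega) (by omega)).2.2.1
          obtain ⟨h1p, h1r, h1θ, h1κ⟩ := hparams z hz1 hz2
          fin_cases i
          · show V (e z 0) = V' (e z 0)
            rw [Uprtk_e0 p r θ κ V hV z (hr z).1 (hr z).2,
              Uprtk_e0 p' r' θ' κ' V' hV' z (hr' z).1 (hr' z).2, h1p, h1r, h1θ, h1κ, h2p, h2θ]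
          · show V (e z 1) = V' (e z 1)
            rw [Uprtk_e1 p r θ κ V hV z (hr z).1 (hr z).2,
              Uprtk_e1 p' r' θ' κ' V' hV' z (hr' z).1 (hr' z).2, h1p, h1r, h1θ, h1κ, h2p, h2θ]
        | zero => simp
        | add u v _ _ hu hv => rw [map_add, map_add, hu, hv]
        | smul a u _ hu => rw [map_smul, map_smul, hu]
      exact hVV
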